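/- Let m ≥ 2 be an integer, let L : ℝ^m → ℝ^m be continuous and open (i.e., L maps open sets to open sets), let G ⊂ ℝ^m be a nonempty bounded open connected set, and let s > 0. Suppose ‖L(x)‖ ≥ s for every x ∈ ∂G, and suppose there exists x1 ∈ G with ‖L(x1)‖ < s. Then the open ball B(0,s) is contained in L(G), and the connected component of ℝ^m \ L(∂G) that contains B(0,s) is contained in L(G); in particular this component is bounded. -/

import Mathlib

/-- The covering step used in Section 7.2 of the paper: if a continuous open map `L`
has `‖L‖ ≥ s` on `∂G` and `‖L x1‖ < s` for some `x1 ∈ G`, then `B(0,s) ⊆ L(G)` and the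
connected component of `ℝ^m \ L(∂G)` containing `B(0,s)` is contained in `L(G)`;
in particular this component is bounded. -/
theorem covering_step {m : ℕ} (hm : 2 ≤ m)
    (L : EuclideanSpace ℝ (Fin m) → EuclideanSpace ℝ (Fin m))
    (hLcont : Continuous L) (hLopen : IsOpenMap L)
    (G : Set (EuclideanSpace ℝ (Fin m))) (hGne : G.Nonempty)
    (hGbdd : Bornology.IsBounded G) (hGopen : IsOpen G) (hGconn : IsConnected G)
    (s : ℝ) (hs : 0 < s)
    (hbdry : ∀ x ∈ frontier G, s ≤ ‖L x‖)
    (hx1 : ∃ x1 ∈ G, ‖L x1‖ < s) :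
    Metric.ball (0 : EuclideanSpace ℝ (Fin m)) s ⊆ L '' G ∧
    connectedComponentIn (L '' frontier G)ᶜ (0 : EuclideanSpace ℝ (Fin m)) ⊆ L '' G ∧
    Bornology.IsBounded
      (connectedComponentIn (L '' frontier G)ᶜ (0 : EuclideanSpace ℝ (Fin m))) := by
  obtain ⟨x1, hx1G, hx1s⟩ := hx1
  have hKc : IsCompact (closure G) := hGbdd.isCompact_closure
  have hLKc : IsCompact (L '' closure G) := hKc.image hLcont
  have hclos : closure (L '' G) ⊆ L '' G ∪ L '' frontier G := by
    have h1 : closure (L '' G) ⊆ L '' closure G :=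
      closure_minimal (Set.image_mono (f := L) subset_closure) hLKc.isClosed
    have h2 : L '' closure G = L '' G ∪ L '' frontier G := by
      rw [closure_eq_self_union_frontier, Set.image_union]
    rw [← h2]; exact h1
  have hLGopen : IsOpen (L '' G) := hLopen G hGopen
  -- Claim 1: ball ⊆ L '' G
  have hball : Metric.ball (0 : EuclideanSpace ℝ (Fin m)) s ⊆ L '' G := by
    apply (convex_ball _ _).isPreconnected.subset_of_closure_inter_subset hLGopen
    · exact ⟨L x1, by simpa [Metric.mem_ball, dist_zero_right] using hx1s,
        Set.mem_image_of_mem L hx1G⟩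
    · rintro y ⟨hy1, hy2⟩
      rcases hclos hy1 with h | h
      · exact h
      · exfalso
        obtain ⟨x, hx, rfl⟩ := h
        have := hbdry x hx
        rw [Metric.mem_ball, dist_zero_right] at hy2
        linarith
  have h0mem : (0 : EuclideanSpace ℝ (Fin m)) ∈ (L '' frontier G)ᶜ := by
    rintro ⟨x, hx, hx0⟩
    have := hbdry x hx
    rw [hx0] at this
    simp only [norm_zero] at this
    linarith
  -- Claim 2
  have hcomp : connectedComponentIn (L '' frontier G)ᶜ (0 : EuclideanSpace ℝ (Fin m)) ⊆
      L '' G := by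
    apply (isPreconnected_connectedComponentIn).subset_of_closure_inter_subset hLGopen
    · refine ⟨0, mem_connectedComponentIn h0mem, hball ?_⟩
      simpa using hs
    · rintro y ⟨hy1, hy2⟩
      rcases hclos hy1 with h | h
      · exact h
      · exact absurd h (connectedComponentIn_subset _ _ hy2)
  refine ⟨hball, hcomp, ?_⟩
  exact (hLKc.isBounded.subset
    ((hcomp.trans (Set.image_mono (f := L) subset_closure))))
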